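/- Let η ∈ Ω¹(X₂) satisfy ∂η = 0 for a Lie groupoid X₁ ⇉ X₀ with Lie algebroid A. Define the t-fiberwise 1-form λ^r on X₁ by λ^r(δ_x) = η(r_{x⁻¹*}δ_x, 0_x) and the s-fiberwise 1-form λ^l by λ^l(δ_x) = η(0_x, l_{x⁻¹*}δ_x). Then for every section V of A: (i) η(V⃗(x), 0_y) = λ^r(V⃗(xy)) − λ^r(V⃗(x)) for all composable (x,y); (ii) η(0_x, V⃖(y)) = λ^l(V⃖(xy)) − λ^l(V⃖(y)); (iii) λ^r(V⃗)(u) = λ^l(V⃖)(u) = 0 for all units u; (iv) η(V⃗(x), −V⃖(x⁻¹)) = λ^l(V⃖)(x⁻¹) − λ^r(V⃗)(x) for all x ∈ X₁. -/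

import Mathlib

/-!
STATEMENT 11. Identities for the fiberwise 1-forms `λ^r`, `λ^l` induced by a
simplicial 1-cocycle `η ∈ Ω¹(X₂)` (`∂η = 0`) on a Lie groupoid `X₁ ⇉ X₀`.
Tangent spaces of `X₁` are abstracted as a family of real vector spaces
`T x`; `dm` is the differential of the groupoid multiplication; `η` is an
additive pairing on compatible tangent pairs; `Rvec V`/`Lvec V` are the
right/left invariant vector fields of a section `V` of the Lie algebroid,
characterised by the invariance hypotheses `HR`, `HL`.  The cocycle condition
`∂η = 0` is recorded (hypothesis `Hcocycle`) as the vanishing of the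
alternating sum of the pullbacks of `η` along the four face maps `X₃ → X₂`,
evaluated on tangent triples.
-/

/-- A (Lie) groupoid with arrows `X₁` over objects `X₀`.  Smooth structure is
abstracted away; only the algebraic structure is retained. -/
structure PreGroupoid (X₁ : Type*) (X₀ : Type*) where
  s : X₁ → X₀
  t : X₁ → X₀
  e : X₀ → X₁
  inv : X₁ → X₁
  m : (x y : X₁) → t x = s y → X₁
  s_e : ∀ u, s (e u) = u
  t_e : ∀ u, t (e u) = u
  s_m : ∀ x y h, s (m x y h) = s x
  t_m : ∀ x y h, t (m x y h) = t y
  s_inv : ∀ x, s (inv x) = t x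
  t_inv : ∀ x, t (inv x) = s x
  m_assoc : ∀ x y z h₁ h₂ h₃ h₄, m (m x y h₁) z h₂ = m x (m y z h₃) h₄
  e_m : ∀ x h, m (e (s x)) x h = x
  m_e : ∀ x h, m x (e (t x)) h = x
  m_inv : ∀ x h, m x (inv x) h = e (s x)
  inv_m : ∀ x h, m (inv x) x h = e (t x)

/-- A (right) action of a groupoid `G` on a set `P` along an anchor map `a`. -/
structure GroupoidAction {X₁ X₀ : Type*} (G : PreGroupoid X₁ X₀) (P : Type*) where
  a : P → X₀
  act : (p : P) → (γ : X₁) → a p = G.s γ → P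
  a_act : ∀ p γ h, a (act p γ h) = G.t γ
  act_e : ∀ p h, act p (G.e (a p)) h = p
  act_m : ∀ p γ δ h₁ h₂ h₃ h₄, act (act p γ h₁) δ h₂ = act p (G.m γ δ h₃) h₄

/-- A `G`-torsor over `S`: a surjection `π : P → S` with a `G`-action which is
simply transitive on the fibres of `π`. -/
structure GroupoidTorsor {X₁ X₀ : Type*} (G : PreGroupoid X₁ X₀) (P : Type*) (S : Type*)
    extends GroupoidAction G P where
  π : P → S
  π_surj : Function.Surjective π
  π_act : ∀ p γ h, π (act p γ h) = π p
  exists_act : ∀ p p', π p = π p' → ∃ γ h, act p γ h = p'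
  act_free : ∀ p γ γ' h h', act p γ h = act p γ' h' → γ = γ'

namespace GroupoidTangent

variable {X₁ X₀ : Type*} (G : PreGroupoid X₁ X₀)
variable {T : X₁ → Type*} [∀ x, AddCommGroup (T x)] [∀ x, Module ℝ (T x)]

/-- Given a 1-form `η ∈ Ω¹(X₂)`, modelled as an additive pairing on compatible
tangent pairs, the `t`-fiberwise 1-form `λ^r` on `X₁`,
`λ^r(δ_x) = η(r_{x⁻¹*}δ_x, 0_x)`, evaluated on the right-invariant vector
field `V⃗` of a section `V` of the Lie algebroid: since
`r_{x⁻¹*}(V⃗(x)) = V⃗(1_{s x})`, this is `η` at the point `(1_{s x}, x) ∈ X₂`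
on the pair `(V⃗(1_{s x}), 0_x)`. -/
def lamr (η : ∀ x y, G.t x = G.s y → T x → T y → ℝ)
    {VF : Type*} (Rvec : VF → ∀ x, T x) (V : VF) (x : X₁) : ℝ :=
  η (G.e (G.s x)) x (G.t_e (G.s x)) (Rvec V (G.e (G.s x))) 0

/-- The `s`-fiberwise 1-form `λ^l`, `λ^l(δ_x) = η(0_x, l_{x⁻¹*}δ_x)`,
evaluated on the left-invariant vector field `V⃖` of `V`. -/
def laml (η : ∀ x y, G.t x = G.s y → T x → T y → ℝ)
    {VF : Type*} (Lvec : VF → ∀ x, T x) (V : VF) (x : X₁) : ℝ :=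
  η x (G.e (G.t x)) ((G.s_e (G.t x)).symm) 0 (Lvec V (G.e (G.t x)))

end GroupoidTangent

open GroupoidTangent

section Aux

variable {X₁ X₀ : Type*} (G : PreGroupoid X₁ X₀)
    {T : X₁ → Type*} [∀ x, AddCommGroup (T x)] [∀ x, Module ℝ (T x)]

theorem m_congr' {x x' y y' : X₁} (hx : x = x') (hy : y = y')
    (h : G.t x = G.s y) (h' : G.t x' = G.s y') :
    G.m x y h = G.m x' y' h' := by subst hx; subst hy; rfl

theorem eta_congr_r (η : ∀ x y, G.t x = G.s y → T x → T y → ℝ)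
    {VF : Type*} (Rvec : VF → ∀ x, T x) (V : VF)
    {x x' y y' : X₁} (hx : x = x') (hy : y = y')
    (h : G.t x = G.s y) (h' : G.t x' = G.s y') :
    η x y h (Rvec V x) 0 = η x' y' h' (Rvec V x') 0 := by
  subst hx; subst hy; rfl

theorem eta_congr_l (η : ∀ x y, G.t x = G.s y → T x → T y → ℝ)
    {VF : Type*} (Lvec : VF → ∀ x, T x) (V : VF)
    {x x' y y' : X₁} (hx : x = x') (hy : y = y')
    (h : G.t x = G.s y) (h' : G.t x' = G.s y') :
    η x y h 0 (Lvec V y) = η x' y' h' 0 (Lvec V y') := by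
  subst hx; subst hy; rfl

end Aux

/-- Let `η ∈ Ω¹(X₂)` with `∂η = 0`.  With `λ^r, λ^l` as
above, for every section `V` of the Lie algebroid `A`:
(i)   `η(V⃗(x), 0_y) = λ^r(V⃗)(xy) − λ^r(V⃗)(x)` for composable `(x, y)`;
(ii)  `η(0_x, V⃖(y)) = λ^l(V⃖)(xy) − λ^l(V⃖)(y)`;
(iii) `λ^r(V⃗)(u) = λ^l(V⃖)(u) = 0` at units `u`;
(iv)  `η(V⃗(x), −V⃖(x⁻¹)) = λ^l(V⃖)(x⁻¹) − λ^r(V⃗)(x)` for all `x ∈ X₁`. -/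
theorem eta_lambda_identities
    {X₁ X₀ : Type*} (G : PreGroupoid X₁ X₀)
    {T : X₁ → Type*} [∀ x, AddCommGroup (T x)] [∀ x, Module ℝ (T x)]
    (dm : ∀ x y (h : G.t x = G.s y), T x → T y → T (G.m x y h))
    (η : ∀ x y, G.t x = G.s y → T x → T y → ℝ)
    {VF : Type*} (Rvec Lvec : VF → ∀ x, T x)
    -- η is additive on (compatible) tangent pairs
    (Hadd : ∀ x y h u u' v v',
      η x y h (u + u') (v + v') = η x y h u v + η x y h u' v')
    -- right/left invariance of the invariant vector fields
    (HR : ∀ (V : VF) x y h, dm x y h (Rvec V x) 0 = Rvec V (G.m x y h))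
    (HL : ∀ (V : VF) x y h, dm x y h 0 (Lvec V y) = Lvec V (G.m x y h))
    (Hdm0 : ∀ x y h, dm x y h 0 0 = 0)
    -- the simplicial cocycle condition ∂η = 0 on X₃
    (Hcocycle : ∀ a x y (h₁ : G.t a = G.s x) (h₂ : G.t x = G.s y)
        (h₃ : G.t (G.m a x h₁) = G.s y) (h₄ : G.t a = G.s (G.m x y h₂))
        (α : T a) (ξ : T x) (υ : T y),
        η x y h₂ ξ υ - η (G.m a x h₁) y h₃ (dm a x h₁ α ξ) υ
          + η a (G.m x y h₂) h₄ α (dm x y h₂ ξ υ) - η a x h₁ α ξ = 0) :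
    (∀ (V : VF) x y (h : G.t x = G.s y),
        η x y h (Rvec V x) 0
          = lamr G η Rvec V (G.m x y h) - lamr G η Rvec V x) ∧
    (∀ (V : VF) x y (h : G.t x = G.s y),
        η x y h 0 (Lvec V y)
          = laml G η Lvec V (G.m x y h) - laml G η Lvec V y) ∧
    (∀ (V : VF) u, lamr G η Rvec V (G.e u) = 0 ∧ laml G η Lvec V (G.e u) = 0) ∧
    (∀ (V : VF) x (h : G.t x = G.s (G.inv x)),
        η x (G.inv x) h (Rvec V x) (-(Lvec V (G.inv x)))
          = laml G η Lvec V (G.inv x) - lamr G η Rvec V x) := by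
  have hz : ∀ x y h, η x y h 0 0 = 0 := by
    intro x y h
    have := Hadd x y h 0 0 0 0
    simp only [add_zero] at this
    linarith
  have hzneg : ∀ x y h (v : T y), η x y h 0 (-v) = - η x y h 0 v := by
    intro x y h v
    have := Hadd x y h 0 0 v (-v)
    simp only [add_zero, add_neg_cancel] at this
    rw [hz] at this
    linarith
  -- Part (i)
  have part1 : ∀ (V : VF) x y (h : G.t x = G.s y),
      η x y h (Rvec V x) 0
        = lamr G η Rvec V (G.m x y h) - lamr G η Rvec V x := by
    intro V x y h
    set a := G.e (G.s x) with ha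
    have h₁ : G.t a = G.s x := G.t_e (G.s x)
    have h₃ : G.t (G.m a x h₁) = G.s y := (G.t_m a x h₁).trans h
    have h₄ : G.t a = G.s (G.m x y h) := h₁.trans (G.s_m x y h).symm
    have hc := Hcocycle a x y h₁ h h₃ h₄ (Rvec V a) 0 0
    rw [HR, Hdm0, hz] at hc
    have e1 : η (G.m a x h₁) y h₃ (Rvec V (G.m a x h₁)) 0
        = η x y h (Rvec V x) 0 :=
      eta_congr_r G η Rvec V (G.e_m x h₁) rfl h₃ h
    have e2 : η a (G.m x y h) h₄ (Rvec V a) 0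
        = lamr G η Rvec V (G.m x y h) :=
      eta_congr_r G η Rvec V (congrArg G.e (G.s_m x y h).symm) rfl h₄ _
    have e3 : η a x h₁ (Rvec V a) 0 = lamr G η Rvec V x := rfl
    rw [e1, e2, e3] at hc
    linarith
  -- Part (ii)
  have part2 : ∀ (V : VF) x y (h : G.t x = G.s y),
      η x y h 0 (Lvec V y)
        = laml G η Lvec V (G.m x y h) - laml G η Lvec V y := by
    intro V x y h
    set b := G.e (G.t y) with hb
    have h₂ : G.t y = G.s b := (G.s_e (G.t y)).symm
    have h₃ : G.t (G.m x y h) = G.s b := (G.t_m x y h).trans h₂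
    have h₄ : G.t x = G.s (G.m y b h₂) := h.trans (G.s_m y b h₂).symm
    have hc := Hcocycle x y b h h₂ h₃ h₄ 0 0 (Lvec V b)
    rw [HL, Hdm0, hz] at hc
    have e1 : η y b h₂ 0 (Lvec V b) = laml G η Lvec V y := rfl
    have e2 : η (G.m x y h) b h₃ 0 (Lvec V b)
        = laml G η Lvec V (G.m x y h) :=
      eta_congr_l G η Lvec V rfl (congrArg G.e (G.t_m x y h).symm) h₃ _
    have e3 : η x (G.m y b h₂) h₄ 0 (Lvec V (G.m y b h₂))
        = η x y h 0 (Lvec V y) :=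
      eta_congr_l G η Lvec V rfl (G.m_e y h₂) h₄ h
    rw [e1, e2, e3] at hc
    linarith
  -- Part (iii)
  have part3 : ∀ (V : VF) u,
      lamr G η Rvec V (G.e u) = 0 ∧ laml G η Lvec V (G.e u) = 0 := by
    intro V u
    have hts : G.t (G.e u) = G.s (G.e u) := (G.t_e u).trans (G.s_e u).symm
    constructor
    · have h1 := part1 V (G.e u) (G.e u) hts
      have hm : G.m (G.e u) (G.e u) hts = G.e u := by
        have hx : G.e u = G.e (G.s (G.e u)) := congrArg G.e (G.s_e u).symm
        have h' : G.t (G.e (G.s (G.e u))) = G.s (G.e u) := G.t_e _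
        rw [m_congr' G hx rfl hts h', G.e_m (G.e u) h']
      have hlhs : η (G.e u) (G.e u) hts (Rvec V (G.e u)) 0
          = lamr G η Rvec V (G.e u) :=
        eta_congr_r G η Rvec V (congrArg G.e (G.s_e u).symm) rfl hts _
      rw [hlhs, hm] at h1
      linarith
    · have h1 := part2 V (G.e u) (G.e u) hts
      have hm : G.m (G.e u) (G.e u) hts = G.e u := by
        have hy : G.e u = G.e (G.t (G.e u)) := congrArg G.e (G.t_e u).symm
        have h' : G.t (G.e u) = G.s (G.e (G.t (G.e u))) := (G.s_e _).symm
        rw [m_congr' G rfl hy hts h', G.m_e (G.e u) h']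
      have hlhs : η (G.e u) (G.e u) hts 0 (Lvec V (G.e u))
          = laml G η Lvec V (G.e u) :=
        eta_congr_l G η Lvec V rfl (congrArg G.e (G.t_e u).symm) hts _
      rw [hlhs, hm] at h1
      linarith
  refine ⟨part1, part2, part3, ?_⟩
  -- Part (iv)
  intro V x h
  have h1 := part1 V x (G.inv x) h
  have h2 := part2 V x (G.inv x) h
  rw [G.m_inv x h] at h1 h2
  have hr0 := (part3 V (G.s x)).1
  have hl0 := (part3 V (G.s x)).2
  have hsplit : η x (G.inv x) h (Rvec V x) (-(Lvec V (G.inv x)))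
      = η x (G.inv x) h (Rvec V x) 0
        + η x (G.inv x) h 0 (-(Lvec V (G.inv x))) := by
    have := Hadd x (G.inv x) h (Rvec V x) 0 0 (-(Lvec V (G.inv x)))
    simpa using this
  rw [hsplit, hzneg]
  linarith
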